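/- Let (S, Δ) be an enriched quantum logic such that S is (at most) countable and Δ is not Boolean, i.e., there exist A, B ∈ Δ with A ∪ B ∉ Δ. Then there exists a state s on (S, Δ) that is not subadditive: there exist A, B ∈ Δ such that no C ∈ Δ satisfies both A ∪ B ⊆ C and s(A) + s(B) ≥ s(C). -/
import Mathlib


open scoped symmDiff

/-- An enriched quantum logic (EQL) on a (nonempty) set `S` (here: the type `α`):
a collection `Δ` of subsets containing the whole set and closed under symmetric
difference. -/
def IsEQL {α : Type*} (Δ : Set (Set α)) : Prop :=
  Set.univ ∈ Δ ∧ ∀ A ∈ Δ, ∀ B ∈ Δ, A ∆ B ∈ Δ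

/-- A state on an EQL `(S, Δ)`: a `[0,1]`-valued map, normalized, additive on
disjoint pairs of `Δ`, and subadditive with respect to symmetric difference. -/
def IsState {α : Type*} (Δ : Set (Set α)) (s : Set α → ℝ) : Prop :=
  (∀ A ∈ Δ, s A ∈ Set.Icc (0 : ℝ) 1) ∧ s Set.univ = 1 ∧
    (∀ A ∈ Δ, ∀ B ∈ Δ, A ∩ B = ∅ → s (A ∪ B) = s A + s B) ∧
    (∀ A ∈ Δ, ∀ B ∈ Δ, s (A ∆ B) ≤ s A + s B)

/-- If `S` is (at most) countable and the EQL `(S, Δ)` is not Boolean (some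
union of two members of `Δ` is not in `Δ`), then there is a state on `(S, Δ)`
that is not subadditive. -/
theorem stmt14 {α : Type*} [Countable α] [Nonempty α]
    (Δ : Set (Set α)) (hΔ : IsEQL Δ)
    (hnotbool : ∃ A ∈ Δ, ∃ B ∈ Δ, A ∪ B ∉ Δ) :
    ∃ s : Set α → ℝ, IsState Δ s ∧
      ∃ A ∈ Δ, ∃ B ∈ Δ, ¬ ∃ C ∈ Δ, A ∪ B ⊆ C ∧ s C ≤ s A + s B := by
  obtain ⟨A, hA, B, hB, hAB⟩ := hnotbool
  obtain ⟨f, hf⟩ := Countable.exists_injective_nat α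
  set T : Set α := (A ∩ B)ᶜ with hT
  have hTne : T.Nonempty := by
    rcases Set.eq_empty_or_nonempty T with h | h
    · exfalso
      have hABu : A ∩ B = Set.univ := by
        have := Set.compl_empty_iff.mp h
        simpa [hT] using this
      have hAu : A = Set.univ := Set.eq_univ_of_univ_subset (hABu ▸ Set.inter_subset_left)
      have hBu : B = Set.univ := Set.eq_univ_of_univ_subset (hABu ▸ Set.inter_subset_right)
      exact hAB (by simpa [hAu, hBu] using hΔ.1)
    · exact h
  set g : α → ℝ := T.indicator (fun x => (1/2 : ℝ) ^ (f x)) with hg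
  have hbase : Summable (fun x => (1/2 : ℝ) ^ (f x)) :=
    (summable_geometric_two).comp_injective hf
  have hgs : Summable g := hbase.indicator T
  have hg0 : ∀ x, 0 ≤ g x := fun x =>
    Set.indicator_nonneg (fun y _ => by positivity) x
  have hgpos : ∀ x ∈ T, 0 < g x := by
    intro x hx
    simp only [hg, Set.indicator_of_mem hx]
    positivity
  have hgzero : ∀ x ∈ A ∩ B, g x = 0 := by
    intro x hx
    exact Set.indicator_of_notMem (by simp [hT, hx]) _
  set Z : ℝ := ∑' x, g x with hZ
  have hsum : ∀ X : Set α, Summable (X.indicator g) := fun X => hgs.indicator X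
  have hZpos : 0 < Z := by
    obtain ⟨t, ht⟩ := hTne
    calc (0:ℝ) < g t := hgpos t ht
    _ ≤ Z := Summable.le_tsum hgs t (fun j _ => hg0 j)
  set s : Set α → ℝ := fun X => (∑' x, X.indicator g x) / Z with hs
  have hmono : ∀ X Y : Set α, X ⊆ Y → s X ≤ s Y := by
    intro X Y hXY
    apply (div_le_div_iff_of_pos_right hZpos).mpr
    exact Summable.tsum_le_tsum (fun x => Set.indicator_le_indicator_of_subset hXY hg0 x)
      (hsum X) (hsum Y)
  have hnonneg : ∀ X : Set α, 0 ≤ s X := by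
    intro X
    apply div_nonneg _ hZpos.le
    exact tsum_nonneg (fun x => Set.indicator_nonneg (fun y _ => hg0 y) x)
  have hle1 : ∀ X : Set α, s X ≤ 1 := by
    intro X
    rw [hs]
    rw [div_le_one hZpos]
    exact Summable.tsum_le_tsum (fun x => Set.indicator_le_self' (fun y _ => hg0 y) x) (hsum X) hgs
  have huniv : s Set.univ = 1 := by
    simp [hs, Set.indicator_univ, ← hZ, div_self hZpos.ne']
  have hadd : ∀ X Y : Set α, X ∩ Y = ∅ → s (X ∪ Y) = s X + s Y := by
    intro X Y hXY
    have hdisj : Disjoint X Y := Set.disjoint_iff_inter_eq_empty.mpr hXY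
    rw [hs]
    simp only
    rw [Set.indicator_union_of_disjoint hdisj]
    rw [Summable.tsum_add (hsum X) (hsum Y), add_div]
  have hsub : ∀ X Y : Set α, s (X ∆ Y) ≤ s X + s Y := by
    intro X Y
    rw [hs]
    simp only
    rw [← add_div]
    apply (div_le_div_iff_of_pos_right hZpos).mpr
    rw [← Summable.tsum_add (hsum X) (hsum Y)]
    apply Summable.tsum_le_tsum _ (hsum _) ((hsum X).add (hsum Y))
    intro x
    by_cases hx : x ∈ X <;> by_cases hx' : x ∈ Y <;>
      simp [Set.indicator, Set.mem_symmDiff, hx, hx', hg0 x]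
  refine ⟨s, ⟨fun X _ => ⟨hnonneg X, hle1 X⟩, huniv, fun X _ Y _ => hadd X Y,
    fun X _ Y _ => hsub X Y⟩, A, hA, B, hB, ?_⟩
  rintro ⟨C, hC, hCsub, hCle⟩
  -- s A + s B = s (A ∪ B) since g vanishes on A ∩ B
  have hkey : s A + s B = s (A ∪ B) := by
    rw [hs]
    simp only
    rw [← add_div, ← Summable.tsum_add (hsum A) (hsum B)]
    congr 1
    apply tsum_congr
    intro x
    by_cases hx : x ∈ A <;> by_cases hx' : x ∈ B
    · simp [Set.indicator, hx, hx', hgzero x ⟨hx, hx'⟩]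
    all_goals simp [Set.indicator, hx, hx']
  -- C strictly contains A ∪ B
  have hne : A ∪ B ≠ C := fun h => hAB (h ▸ hC)
  obtain ⟨x, hxC, hxAB⟩ : ∃ x, x ∈ C ∧ x ∉ A ∪ B := by
    by_contra h
    push_neg at h
    exact hne (Set.Subset.antisymm hCsub h)
  have hxT : x ∈ T := by
    simp only [hT, Set.mem_compl_iff]
    intro hx
    exact hxAB (Or.inl hx.1)
  have hlt : s (A ∪ B) < s C := by
    have h1 : s (A ∪ B) + s {x} ≤ s C := by
      rw [← hadd (A ∪ B) {x} (by
        ext y; simp only [Set.mem_inter_iff, Set.mem_singleton_iff, Set.mem_empty_iff_false,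
          iff_false]
        rintro ⟨hy, rfl⟩; exact hxAB hy)]
      apply hmono
      intro y hy
      rcases hy with hy | hy
      · exact hCsub hy
      · rwa [Set.mem_singleton_iff.mp hy]
    have h2 : 0 < s {x} := by
      rw [hs]
      simp only
      apply div_pos _ hZpos
      calc (0:ℝ) < g x := hgpos x hxT
      _ = Set.indicator {x} g x := (Set.indicator_of_mem rfl g).symm
      _ ≤ ∑' y, Set.indicator {x} g y :=
          Summable.le_tsum (hsum {x}) x (fun j _ => Set.indicator_nonneg (fun y _ => hg0 y) j)
    linarith
  rw [hkey] at hCle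
  exact absurd hCle (not_le.mpr hlt)
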